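/- The solution of the recurrence b₁ = 1, b_{n+1} = b_n + (b₁ + b₂ + ⋯ + b_n)/n satisfies b_n = e^{Θ(√n)}; that is, there exist constants c₁, c₂ > 0 such that e^{c₁√n} ≤ b_n ≤ e^{c₂√n} for all sufficiently large n. -/

import Mathlib

set_option linter.unusedSectionVars false


open Finset Real

section auxRF
variable (x y t n : ℝ) (hx2 : x^2 = n) (hy2 : y^2 = n+1) (hn : 2 ≤ n)
    (hx1 : 1 ≤ x) (hxy : x < y) (ht : t = y - x) (htt : t * (x + y) = 1)

include hx2 hy2 hn hx1 hxy ht htt in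
private lemma RF_hEt : exp t ≤ 1 / (1 - t) := by
  have h0 : 0 < 1 - t := by nlinarith
  have hme : exp (-t) * exp t = 1 := by rw [← Real.exp_add]; simp
  have h1 : (1 - t) ≤ exp (-t) := by linarith [Real.add_one_le_exp (-t)]
  have h2 : (1 - t) * exp t ≤ 1 := by
    calc (1-t)*exp t ≤ exp (-t)*exp t := mul_le_mul_of_nonneg_right h1 (exp_pos t).le
      _ = 1 := hme
  rw [le_div_iff₀ h0]; linarith

include hx2 hy2 hn hx1 hxy ht htt in
private lemma RF_key1 : exp t ≤ (x + 1) / x := by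
  have h0 : 0 < 1 - t := by nlinarith
  have hx0 : (0:ℝ) < x := by linarith
  refine (RF_hEt x y t n hx2 hy2 hn hx1 hxy ht htt).trans ?_
  rw [div_le_div_iff₀ h0 hx0]
  have hy1 : 1 ≤ y := by nlinarith
  nlinarith

include hx2 hy2 hn hx1 hxy ht htt in
private lemma RF_key2 : exp t ≤ (y^2 + x) / (x * y) := by
  have h0 : 0 < 1 - t := by nlinarith
  have hx0 : (0:ℝ) < x := by linarith
  have hy0 : (0:ℝ) < y := by linarith
  have hy1 : 1 ≤ y := by nlinarith
  refine (RF_hEt x y t n hx2 hy2 hn hx1 hxy ht htt).trans ?_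
  rw [div_le_div_iff₀ h0 (by positivity)]
  have h5 : (t*(x+y))*(y^2+x) = y^2+x := by rw [htt]; ring
  have hy3 : y^3 = (n+1)*y := by nlinarith [hy2]
  have hx2y : x^2*y = n*y := by nlinarith [hx2]
  have hpos : (0:ℝ) ≤ (x+1)*(y-1) := mul_nonneg (by linarith) (by linarith)
  have h6 : (x*y)*(x+y) ≤ ((y^2+x)*(1-t))*(x+y) := by nlinarith [h5, hy3, hx2y, hpos]
  have := le_of_mul_le_mul_right h6 (by linarith : (0:ℝ) < x+y)
  linarith

include hx2 hy2 hn hx1 hxy ht htt in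
private lemma RF_key3 : (x+1)/x ≤ 1 + 3*t := by
  have hx0 : (0:ℝ) < x := by linarith
  have hy2x : y ≤ 2*x := by nlinarith
  rw [div_le_iff₀ hx0]
  nlinarith

include hx2 hy2 hn hx1 hxy ht htt in
private lemma RF_key4 : 1/x + 1/y^2 ≤ (1 + 3*t)/y := by
  have hx0 : (0:ℝ) < x := by linarith
  have hy0 : (0:ℝ) < y := by linarith
  have h24 : x^2 + y ≤ 2*x*y := by nlinarith
  rw [div_add_div _ _ (ne_of_gt hx0) (by positivity), div_le_div_iff₀ (by positivity) hy0]
  refine le_of_mul_le_mul_right ?_ (show (0:ℝ) < x+y by linarith)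
  have h5 : (t*(x+y))*(3*x*y^2) = 3*x*y^2 := by rw [htt]; ring
  have hy2x2 : y^2 = x^2 + 1 := by linarith
  have hy4 : y^4 = (x^2+1)*y^2 := by rw [show y^4 = y^2*y^2 by ring, hy2x2]
  have h24y : (x^2 + y)*y ≤ 2*x*y*y := mul_le_mul_of_nonneg_right h24 hy0.le
  nlinarith [h5, hy4, h24y]

end auxRF

set_option maxHeartbeats 1000000 in
/-- The recurrence `b₁ = 1`, `b_{n+1} = b_n + (b₁ + ⋯ + b_n)/n` has solution
`b_n = e^{Θ(√n)}`. -/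
theorem stmt_1 (b : ℕ → ℝ) (hb1 : b 1 = 1)
    (hrec : ∀ n : ℕ, 1 ≤ n → b (n + 1) = b n + (∑ i ∈ Finset.Icc 1 n, b i) / n) :
    ∃ c₁ c₂ : ℝ, 0 < c₁ ∧ 0 < c₂ ∧ ∃ N : ℕ, ∀ n : ℕ, N ≤ n →
      Real.exp (c₁ * Real.sqrt n) ≤ b n ∧ b n ≤ Real.exp (c₂ * Real.sqrt n) := by
  set a : ℕ → ℝ := fun n => (∑ i ∈ Finset.Icc 1 n, b i) / n with ha
  have hbrec : ∀ n : ℕ, 1 ≤ n → b (n + 1) = b n + a n := hrec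
  have hS1 : (∑ i ∈ Finset.Icc 1 1, b i) = 1 := by simp [hb1]
  have hb2 : b 2 = 2 := by
    have := hrec 1 le_rfl
    rw [hS1] at this
    norm_num at this
    linarith
  have ha2 : a 2 = 3 / 2 := by
    have : (∑ i ∈ Finset.Icc 1 2, b i) = 3 := by
      rw [show Finset.Icc 1 2 = Finset.Icc 1 (1+1) from rfl, Finset.sum_Icc_succ_top (by norm_num)]
      rw [hS1]; norm_num [hb2]
    rw [ha]; simp only [this]; norm_num
  have harec : ∀ n : ℕ, 1 ≤ n → a (n + 1) = a n + b n / ((n : ℝ) + 1) := by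
    intro n hn
    have hn0 : (n : ℝ) ≠ 0 := by exact_mod_cast Nat.one_le_iff_ne_zero.mp hn
    have hn1 : (n : ℝ) + 1 ≠ 0 := by positivity
    have hsum : (∑ i ∈ Finset.Icc 1 (n+1), b i) = (∑ i ∈ Finset.Icc 1 n, b i) + b (n+1) :=
      Finset.sum_Icc_succ_top (by omega) b
    have hb' := hrec n hn
    rw [ha]
    simp only [hsum, hb']
    push_cast
    field_simp
    ring
  have key : ∀ n : ℕ, 2 ≤ n →
      exp (Real.sqrt n) / 5 ≤ b n ∧ exp (Real.sqrt n) / (5 * Real.sqrt n) ≤ a n ∧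
      b n ≤ exp (3 * Real.sqrt n) ∧ a n ≤ exp (3 * Real.sqrt n) / Real.sqrt n := by
    intro n hn
    induction n, hn using Nat.le_induction with
    | base =>
      have hc : ((2:ℕ):ℝ) = 2 := by norm_num
      rw [hc, hb2, ha2]
      set s := Real.sqrt 2 with hs
      have hs2 : s^2 = 2 := Real.sq_sqrt (by norm_num)
      have hsl : 1.41 ≤ s := by nlinarith [Real.sqrt_nonneg 2]
      have hsu : s ≤ 1.5 := by nlinarith [Real.sqrt_nonneg 2]
      have h3 : Real.exp 3 < 21 := by
        have h : Real.exp 3 = exp 1 * exp 1 * exp 1 := by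
          rw [← Real.exp_add, ← Real.exp_add]; norm_num
        nlinarith [Real.exp_one_lt_d9, Real.exp_pos 1]
      have h15 : Real.exp 1.5 < 10 := by
        have hsq : Real.exp 1.5 * Real.exp 1.5 = Real.exp 3 := by
          rw [← Real.exp_add]; norm_num
        nlinarith [Real.exp_pos 1.5]
      have he : exp s ≤ 10 := ((Real.exp_le_exp.mpr hsu).trans_lt h15).le
      have he3 : 1 + 3*s ≤ exp (3*s) := by linarith [Real.add_one_le_exp (3*s)]
      refine ⟨?_, ?_, ?_, ?_⟩
      · rw [div_le_iff₀ (by norm_num : (0:ℝ) < 5)]; linarith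
      · rw [div_le_iff₀ (by positivity)]; nlinarith
      · linarith
      · rw [le_div_iff₀ (by positivity)]; nlinarith
    | succ n hn ih =>
      obtain ⟨ih1, ih2, ih3, ih4⟩ := ih
      have hn2 : (2:ℝ) ≤ (n:ℝ) := by exact_mod_cast hn
      have hcast : ((n+1:ℕ):ℝ) = (n:ℝ) + 1 := by push_cast; ring
      rw [hcast]
      set x := Real.sqrt n with hx
      set y := Real.sqrt ((n:ℝ)+1) with hy
      have hx2 : x^2 = n := Real.sq_sqrt (by linarith)
      have hy2 : y^2 = (n:ℝ)+1 := Real.sq_sqrt (by linarith)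
      have hx1 : 1 ≤ x := by nlinarith [Real.sqrt_nonneg (n:ℝ)]
      have hxy : x < y := Real.sqrt_lt_sqrt (by linarith) (by linarith)
      have hx0 : (0:ℝ) < x := by linarith
      have hy0 : (0:ℝ) < y := by linarith
      set t := y - x with htd
      have htt : t * (x + y) = 1 := by rw [htd]; linear_combination hy2 - hx2
      have k1 := RF_key1 x y t n hx2 hy2 hn2 hx1 hxy htd htt
      have k2 := RF_key2 x y t n hx2 hy2 hn2 hx1 hxy htd htt
      have k3 := RF_key3 x y t n hx2 hy2 hn2 hx1 hxy htd htt
      have k4 := RF_key4 x y t n hx2 hy2 hn2 hx1 hxy htd htt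
      have hexpy : exp y = exp x * exp t := by rw [← Real.exp_add]; congr 1; rw [htd]; ring
      have hexp3y : exp (3*y) = exp (3*x) * exp (3*t) := by
        rw [← Real.exp_add]; congr 1; rw [htd]; ring
      have hE3t : 1 + 3*t ≤ exp (3*t) := by linarith [Real.add_one_le_exp (3*t)]
      have hbn1 : b (n+1) = b n + a n := hbrec n (by omega)
      have han1 : a (n+1) = a n + b n / ((n:ℝ)+1) := harec n (by omega)
      refine ⟨?_, ?_, ?_, ?_⟩
      · rw [hbn1, hexpy]
        calc exp x * exp t / 5 ≤ exp x * ((x+1)/x) / 5 := by gcongr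
          _ = exp x / 5 + exp x / (5*x) := by field_simp
          _ ≤ b n + a n := add_le_add ih1 ih2
      · rw [han1, hexpy]
        calc exp x * exp t / (5*y) ≤ exp x * ((y^2+x)/(x*y)) / (5*y) := by gcongr
          _ = exp x / (5*x) + exp x / (5*y^2) := by field_simp
          _ = exp x / (5*x) + (exp x / 5) / ((n:ℝ)+1) := by
              rw [hy2]
              have hne : ((n:ℝ)+1) ≠ 0 := by positivity
              field_simp
              try ring
          _ ≤ a n + b n / ((n:ℝ)+1) := add_le_add ih2 (by gcongr)
      · rw [hbn1, hexp3y]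
        calc b n + a n ≤ exp (3*x) + exp (3*x)/x := add_le_add ih3 ih4
          _ = exp (3*x) * ((x+1)/x) := by field_simp
          _ ≤ exp (3*x) * (1+3*t) := by gcongr
          _ ≤ exp (3*x) * exp (3*t) := by gcongr
      · rw [han1, hexp3y]
        calc a n + b n / ((n:ℝ)+1) ≤ exp (3*x)/x + exp (3*x)/((n:ℝ)+1) :=
              add_le_add ih4 (by gcongr)
          _ = exp (3*x) * (1/x + 1/y^2) := by rw [hy2]; field_simp
          _ ≤ exp (3*x) * ((1+3*t)/y) := by gcongr
          _ ≤ exp (3*x) * exp (3*t) / y := by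
              rw [mul_div_assoc]
              gcongr
  refine ⟨1/2, 3, by norm_num, by norm_num, 16, fun n hn => ?_⟩
  obtain ⟨k1, -, k3, -⟩ := key n (by omega)
  have hn16 : (16:ℝ) ≤ (n:ℝ) := by exact_mod_cast hn
  set s := Real.sqrt n with hs
  have hs2 : s^2 = n := Real.sq_sqrt (by linarith)
  have hs4 : 4 ≤ s := by nlinarith [Real.sqrt_nonneg (n:ℝ)]
  have h5e : (5:ℝ) ≤ exp 2 := by
    have h : Real.exp 2 = exp 1 * exp 1 := by rw [← Real.exp_add]; norm_num
    nlinarith [Real.exp_one_gt_d9]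
  constructor
  · refine le_trans ?_ k1
    have hsplit : exp s = exp ((1/2)*s) * exp ((1/2)*s) := by
      rw [← Real.exp_add]; congr 1; ring
    have h2 : exp 2 ≤ exp ((1/2)*s) := Real.exp_le_exp.mpr (by linarith)
    rw [le_div_iff₀ (by norm_num : (0:ℝ) < 5), hsplit]
    have h5' : (5:ℝ) ≤ exp ((1/2)*s) := h5e.trans h2
    nlinarith [Real.exp_pos ((1/2)*s)]
  · exact k3
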